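/- Let σ > 0 and let y ∈ dom L satisfy y ∈ closure(U) and ⟨y, u⟩ = 0 for all u ∈ U^σ. Then P(Iᵗ(Ly)) = 0 for all 0 ≤ t ≤ σ (since Iᵗy ∈ dom L with L(Iᵗy) = Iᵗ(Ly), this says that Γ₂ of the trajectory v^y(t) := Iᵗy vanishes on [0,σ]). -/

import Mathlib

open MeasureTheory
open scoped ComplexInnerProductSpace

variable {H : Type*} [NormedAddCommGroup H] [InnerProductSpace ℂ H] [CompleteSpace H]

/-- `Iᵗ = L^{-1/2}·sin(t·L^{1/2})`, realized by applying the continuous functional calculus of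
the bounded positive self-adjoint operator `T = L⁻¹` to the continuous function
`hₜ(x) = √x·sin(t/√x)` (for `x > 0`, extended by `0` at `x ≤ 0`). -/
noncomputable def waveOp (T : H →L[ℂ] H) (t : ℝ) : H →L[ℂ] H :=
  cfc (fun x : ℝ => if 0 < x then Real.sqrt x * Real.sin (t / Real.sqrt x) else 0) T

/-- The class `M` of smooth controls: smooth `K`-valued functions of time vanishing near `t = 0`
(all time functions are extended by zero to `t < 0`). -/
def IsSmoothControl (K : Submodule ℂ H) (f : ℝ → H) : Prop :=
  ContDiff ℝ (⊤ : ℕ∞) f ∧ (∀ t, f t ∈ K) ∧ ∃ ε > 0, ∀ t ≤ ε, f t = 0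

/-- The wave `u^f(t) = -f(t) + ∫₀ᵗ I^{t-s} f''(s) ds` (Bochner integral). -/
noncomputable def wave (T : H →L[ℂ] H) (f : ℝ → H) (t : ℝ) : H :=
  -f t + ∫ s in (0:ℝ)..t, waveOp T (t - s) (deriv (deriv f) s)

/-- The context of the paper: `L₀` is a closed, densely defined, symmetric, positive definite
operator in the Hilbert space `H`; `L` is its Friedrichs (self-adjoint) extension,
`L₀ ⊆ L ⊆ L₀*`, with an everywhere defined bounded self-adjoint positive injective inverse `T`;
`K = ker L₀*`.  The boundary operators are `Γ₁y = T(L₀*y) − y` and `Γ₂y = P(L₀*y)`, where `P`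
is the orthogonal projection onto `K`. -/
structure Setting (L₀ L : H →ₗ.[ℂ] H) (T : H →L[ℂ] H) (K : Submodule ℂ H) : Prop where
  dense_domain : Dense (L₀.domain : Set H)
  closed : L₀.IsClosed
  symmetric : ∀ x y : L₀.domain, ⟪L₀ x, (y : H)⟫ = ⟪(x : H), L₀ y⟫
  posdef : ∃ γ : ℝ, 0 < γ ∧ ∀ x : L₀.domain, γ * ‖(x : H)‖ ^ 2 ≤ (⟪L₀ x, (x : H)⟫).re
  extension : L₀ ≤ L
  le_adjoint : L ≤ L₀.adjoint
  selfadjoint : L.adjoint = L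
  T_selfadjoint : IsSelfAdjoint T
  T_positive : ∀ x : H, 0 ≤ (⟪T x, x⟫).re
  T_injective : Function.Injective T
  T_inv_left : ∀ x : L.domain, T (L x) = x
  T_mem_domain : ∀ y : H, T y ∈ L.domain
  T_inv_right : ∀ y : H, ∀ hy : T y ∈ L.domain, L ⟨T y, hy⟩ = y
  kernel : ∀ x : H, x ∈ K ↔ ∃ hx : x ∈ L₀.adjoint.domain, L₀.adjoint ⟨x, hx⟩ = 0

/-- The reachable set `U^τ = {u^f(τ) : f ∈ M}` for `τ ≥ 0`, and `{0}` for `τ < 0`. -/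
def reachSet (K : Submodule ℂ H) (T : H →L[ℂ] H) (τ : ℝ) : Set H :=
  if 0 ≤ τ then {x | ∃ f, IsSmoothControl K f ∧ wave T f τ = x} else {0}

/-- The total reachable set `U = span ⋃_{τ>0} U^τ`. -/
def reachSpan (K : Submodule ℂ H) (T : H →L[ℂ] H) : Submodule ℂ H :=
  Submodule.span ℂ (⋃ τ ∈ Set.Ioi (0:ℝ), reachSet K T τ)

/-- The wave `v^ψ(t) = ∫₀ᵗ I^{t-s} ψ(s) ds` produced by a source `ψ` in system `β`. -/
noncomputable def sourceWave (T : H →L[ℂ] H) (ψ : ℝ → H) (t : ℝ) : H :=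
  ∫ s in (0:ℝ)..t, waveOp T (t - s) (ψ s)

namespace Stmt13Aux


/-! ### Elementary trigonometric bounds -/

lemma abs_cos_sub_one_le (v : ℝ) : |Real.cos v - 1| ≤ v ^ 2 / 2 := by
  rw [abs_sub_comm, abs_of_nonneg (by linarith [Real.cos_le_one v])]
  linarith [Real.one_sub_sq_div_two_le_cos (x := v)]

private lemma abs_sin_sub_le_aux {v : ℝ} (hv : 0 ≤ v) : |Real.sin v - v| ≤ v ^ 2 := by
  rcases le_or_gt v 2 with h2 | h2
  · have hmvt := norm_image_sub_le_of_norm_deriv_le_segment'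
      (f := fun x => Real.sin x - x) (f' := fun x => Real.cos x - 1) (a := 0) (b := v)
      (C := v ^ 2 / 2)
      (fun x _ => ((Real.hasDerivAt_sin x).sub (hasDerivAt_id x)).hasDerivWithinAt)
      (fun x hx => by
        rw [Real.norm_eq_abs]
        refine (abs_cos_sub_one_le x).trans ?_
        have : x ^ 2 ≤ v ^ 2 := pow_le_pow_left₀ hx.1 hx.2.le 2
        linarith)
      v ⟨hv, le_refl v⟩
    simp only [Real.sin_zero, sub_zero, sub_self] at hmvt
    rw [Real.norm_eq_abs] at hmvt
    nlinarith [abs_nonneg (Real.sin v - v)]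
  · have h1 : |Real.sin v| ≤ 1 := Real.abs_sin_le_one v
    have h3 : |Real.sin v - v| ≤ |Real.sin v| + |v| := abs_sub _ _
    rw [abs_of_nonneg hv] at h3
    nlinarith

lemma abs_sin_sub_le (v : ℝ) : |Real.sin v - v| ≤ v ^ 2 := by
  rcases le_or_gt 0 v with hv | hv
  · exact abs_sin_sub_le_aux hv
  · have := abs_sin_sub_le_aux (neg_nonneg.mpr hv.le)
    rw [Real.sin_neg] at this
    calc |Real.sin v - v| = |-Real.sin v - -v| := by rw [← abs_neg]; ring_nf
    _ ≤ (-v) ^ 2 := this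
    _ = v ^ 2 := by ring

lemma key_sin (u v : ℝ) : |Real.sin (u + v) - Real.sin u - v * Real.cos u| ≤ 3 / 2 * v ^ 2 := by
  have h : Real.sin (u + v) - Real.sin u - v * Real.cos u
      = Real.sin u * (Real.cos v - 1) + Real.cos u * (Real.sin v - v) := by
    rw [Real.sin_add]; ring
  rw [h]
  calc |Real.sin u * (Real.cos v - 1) + Real.cos u * (Real.sin v - v)|
      ≤ |Real.sin u * (Real.cos v - 1)| + |Real.cos u * (Real.sin v - v)| := abs_add_le _ _
    _ ≤ 1 * (v ^ 2 / 2) + 1 * v ^ 2 := by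
        rw [abs_mul, abs_mul]
        gcongr
        · exact Real.abs_sin_le_one u
        · exact abs_cos_sub_one_le v
        · exact Real.abs_cos_le_one u
        · exact abs_sin_sub_le v
    _ = 3 / 2 * v ^ 2 := by ring

lemma key_cos (u v : ℝ) : |Real.cos (u + v) - Real.cos u + v * Real.sin u| ≤ 3 / 2 * v ^ 2 := by
  have h : Real.cos (u + v) - Real.cos u + v * Real.sin u
      = Real.cos u * (Real.cos v - 1) - Real.sin u * (Real.sin v - v) := by
    rw [Real.cos_add]; ring
  rw [h]
  calc |Real.cos u * (Real.cos v - 1) - Real.sin u * (Real.sin v - v)|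
      ≤ |Real.cos u * (Real.cos v - 1)| + |Real.sin u * (Real.sin v - v)| := abs_sub _ _
    _ ≤ 1 * (v ^ 2 / 2) + 1 * v ^ 2 := by
        rw [abs_mul, abs_mul]
        gcongr
        · exact Real.abs_cos_le_one u
        · exact abs_cos_sub_one_le v
        · exact Real.abs_sin_le_one u
        · exact abs_sin_sub_le v
    _ = 3 / 2 * v ^ 2 := by ring

lemma abs_sin_sub_sin_le (a b : ℝ) : |Real.sin a - Real.sin b| ≤ |a - b| := by
  rw [Real.sin_sub_sin]
  have h1 := Real.abs_sin_le_abs (x := (a - b) / 2)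
  have h2 := Real.abs_cos_le_one ((a + b) / 2)
  rw [abs_mul, abs_mul]
  have : |(2:ℝ)| = 2 := by norm_num
  rw [this]
  have h3 : |(a - b) / 2| = |a - b| / 2 := by rw [abs_div]; norm_num
  rw [h3] at h1
  nlinarith [abs_nonneg (Real.sin ((a-b)/2)), abs_nonneg (a - b)]

/-! ### Continuity of the symbol functions -/

lemma cont_main (p : ℝ → ℝ) (hp : Continuous p) (hp0 : p 0 = 0) (hpneg : ∀ x ≤ (0:ℝ), p x = 0)
    (trig : ℝ → ℝ) (htrig : Continuous trig) (hb : ∀ u, |trig u| ≤ 1) (t : ℝ) :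
    Continuous fun x => p x * trig (t / Real.sqrt x) := by
  rw [continuous_iff_continuousAt]
  intro x₀
  rcases lt_trichotomy x₀ 0 with hx | hx | hx
  · have hev : (fun _ => (0:ℝ)) =ᶠ[nhds x₀] (fun x => p x * trig (t / Real.sqrt x)) := by
      filter_upwards [Iio_mem_nhds hx] with x hx'
      simp [hpneg x (le_of_lt hx')]
    exact (continuousAt_const (y := (0:ℝ))).congr hev
  · subst hx
    have h0 : p 0 * trig (t / Real.sqrt 0) = 0 := by simp [hp0]
    rw [ContinuousAt, h0]
    apply squeeze_zero_norm (a := fun x => |p x|)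
    · intro x
      rw [Real.norm_eq_abs, abs_mul]
      calc |p x| * |trig (t / Real.sqrt x)| ≤ |p x| * 1 :=
        mul_le_mul_of_nonneg_left (hb _) (abs_nonneg _)
      _ = |p x| := mul_one _
    · have : ContinuousAt (fun x => |p x|) 0 := (hp.abs).continuousAt
      rw [ContinuousAt] at this
      simpa [hp0] using this
  · have hs : Real.sqrt x₀ ≠ 0 := by positivity
    exact (hp.continuousAt).mul
      ((htrig.continuousAt).comp (continuousAt_const.div (Real.continuous_sqrt.continuousAt) hs))

lemma cont_h (t : ℝ) : Continuous fun x : ℝ => Real.sqrt x * Real.sin (t / Real.sqrt x) :=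
  cont_main _ Real.continuous_sqrt Real.sqrt_zero
    (fun x hx => Real.sqrt_eq_zero'.mpr hx) _ Real.continuous_sin Real.abs_sin_le_one t

lemma cont_b (t : ℝ) : Continuous fun x : ℝ => Real.sqrt x * (x * Real.sin (t / Real.sqrt x)) := by
  have := cont_main (fun x => Real.sqrt x * x) (Real.continuous_sqrt.mul continuous_id)
    (by simp) (fun x hx => by simp [Real.sqrt_eq_zero'.mpr hx])
    _ Real.continuous_sin Real.abs_sin_le_one t
  simpa [mul_assoc] using this

lemma cont_c (t : ℝ) : Continuous fun x : ℝ =>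
    Real.sqrt x * (Real.sqrt x * Real.cos (t / Real.sqrt x)) := by
  have := cont_main (fun x => Real.sqrt x * Real.sqrt x)
    (Real.continuous_sqrt.mul Real.continuous_sqrt)
    (by simp) (fun x hx => by simp [Real.sqrt_eq_zero'.mpr hx])
    _ Real.continuous_cos Real.abs_cos_le_one t
  simpa [mul_assoc] using this


/-! ### Operator families via the continuous functional calculus -/

/-- `Bop T t = cfc (x ↦ x^{3/2} sin(t/√x)) T`; formally `Bop T t = T ∘ waveOp T t`. -/
noncomputable def Bop (T : H →L[ℂ] H) (t : ℝ) : H →L[ℂ] H :=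
  cfc (fun x : ℝ => Real.sqrt x * (x * Real.sin (t / Real.sqrt x))) T

/-- `Cop T t = cfc (x ↦ x cos(t/√x)) T`. -/
noncomputable def Cop (T : H →L[ℂ] H) (t : ℝ) : H →L[ℂ] H :=
  cfc (fun x : ℝ => Real.sqrt x * (Real.sqrt x * Real.cos (t / Real.sqrt x))) T

lemma waveOp_eq (T : H →L[ℂ] H) (t : ℝ) :
    waveOp T t = cfc (fun x : ℝ => Real.sqrt x * Real.sin (t / Real.sqrt x)) T := by
  unfold waveOp
  congr 1
  funext x
  by_cases hx : 0 < x
  · simp [hx]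
  · simp [hx, Real.sqrt_eq_zero'.mpr (not_lt.mp hx)]

lemma norm_cfc_le'' (T : H →L[ℂ] H) (f : ℝ → ℝ) {M : ℝ} (hM : 0 ≤ M)
    (h : ∀ x ∈ spectrum ℝ T, |f x| ≤ M) : ‖cfc f T‖ ≤ M :=
  norm_cfc_le hM (fun x hx => by simpa using h x hx)

lemma hasDerivAt_of_sq_bound {F : ℝ → H →L[ℂ] H} {G : H →L[ℂ] H} {t C : ℝ}
    (hb : ∀ s, ‖F s - F t - (s - t) • G‖ ≤ C * (s - t) ^ 2) : HasDerivAt F G t := by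
  rw [hasDerivAt_iff_isLittleO]
  have h1 : (fun s => s - t) =o[nhds t] (fun _ => (1 : ℝ)) := by
    rw [Asymptotics.isLittleO_one_iff]
    simpa using (continuous_sub_right t).tendsto t
  have h2 : (fun s : ℝ => C * (s - t) ^ 2) =o[nhds t] (fun s => s - t) := by
    have := (h1.mul_isBigO (Asymptotics.isBigO_refl (fun s : ℝ => s - t) (nhds t))).const_mul_left C
    simpa [pow_two, one_mul, mul_assoc] using this
  refine Asymptotics.IsBigO.trans_isLittleO ?_ h2
  apply Asymptotics.isBigO_of_le
  intro s
  refine (hb s).trans ?_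
  rw [Real.norm_eq_abs]
  exact le_abs_self _

section deriv

variable (T : H →L[ℂ] H) (hT : IsSelfAdjoint T) {R : ℝ}
  (hR : ∀ x ∈ spectrum ℝ T, 0 ≤ x ∧ x ≤ R)

include hT hR in
lemma hasDerivAt_Bop (t : ℝ) : HasDerivAt (Bop T) (Cop T t) t := by
  apply hasDerivAt_of_sq_bound (C := 3 / 2 * Real.sqrt R)
  intro s
  have hdiff : Bop T s - Bop T t - (s - t) • Cop T t
      = cfc (fun x : ℝ => Real.sqrt x * (x * Real.sin (s / Real.sqrt x))
          - Real.sqrt x * (x * Real.sin (t / Real.sqrt x))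
          - (s - t) • (Real.sqrt x * (Real.sqrt x * Real.cos (t / Real.sqrt x)))) T := by
    rw [cfc_sub (fun x : ℝ => Real.sqrt x * (x * Real.sin (s / Real.sqrt x))
          - Real.sqrt x * (x * Real.sin (t / Real.sqrt x)))
        (fun x : ℝ => (s - t) • (Real.sqrt x * (Real.sqrt x * Real.cos (t / Real.sqrt x)))) T
        (((cont_b s).sub (cont_b t)).continuousOn)
        (((cont_c t).const_smul (s - t)).continuousOn),
      cfc_sub _ _ T ((cont_b s).continuousOn) ((cont_b t).continuousOn),
      cfc_smul (s - t) _ T ((cont_c t).continuousOn)]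
    rfl
  rw [hdiff]
  apply norm_cfc_le'' T _ (by positivity)
  intro x hx
  obtain ⟨hx0, hxR⟩ := hR x hx
  rcases eq_or_lt_of_le hx0 with hx0' | hx0'
  · simp [← hx0', Real.sqrt_zero]
    positivity
  · set r := Real.sqrt x with hrdef
    have hr0 : 0 < r := Real.sqrt_pos.mpr hx0'
    have hrr : r * r = x := Real.mul_self_sqrt hx0'.le
    have hsplit : s / r = t / r + (s - t) / r := by field_simp; ring
    have heq : Real.sqrt x * (x * Real.sin (s / Real.sqrt x))
          - Real.sqrt x * (x * Real.sin (t / Real.sqrt x))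
          - (s - t) • (Real.sqrt x * (Real.sqrt x * Real.cos (t / Real.sqrt x)))
        = (r * x) * (Real.sin (t / r + (s - t) / r) - Real.sin (t / r)
            - ((s - t) / r) * Real.cos (t / r)) := by
      rw [← hrdef, ← hsplit, smul_eq_mul, ← hrr]
      field_simp
    rw [heq, abs_mul]
    have hb := key_sin (t / r) ((s - t) / r)
    calc |r * x| * |Real.sin (t / r + (s - t) / r) - Real.sin (t / r)
            - ((s - t) / r) * Real.cos (t / r)|
        ≤ |r * x| * (3 / 2 * ((s - t) / r) ^ 2) :=
          mul_le_mul_of_nonneg_left hb (abs_nonneg _)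
      _ = 3 / 2 * r * (s - t) ^ 2 := by
          rw [abs_of_nonneg (by positivity)]
          rw [← hrr]
          field_simp
      _ ≤ 3 / 2 * Real.sqrt R * (s - t) ^ 2 := by
          have : r ≤ Real.sqrt R := Real.sqrt_le_sqrt hxR
          gcongr

include hT hR in
lemma hasDerivAt_Cop (t : ℝ) : HasDerivAt (Cop T) (-(waveOp T t)) t := by
  apply hasDerivAt_of_sq_bound (C := 3 / 2)
  intro s
  rw [waveOp_eq]
  have hdiff : Cop T s - Cop T t - (s - t) • (-(cfc (fun x : ℝ =>
        Real.sqrt x * Real.sin (t / Real.sqrt x)) T))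
      = cfc (fun x : ℝ => Real.sqrt x * (Real.sqrt x * Real.cos (s / Real.sqrt x))
          - Real.sqrt x * (Real.sqrt x * Real.cos (t / Real.sqrt x))
          - (s - t) • (-(Real.sqrt x * Real.sin (t / Real.sqrt x)))) T := by
    rw [cfc_sub (fun x : ℝ => Real.sqrt x * (Real.sqrt x * Real.cos (s / Real.sqrt x))
          - Real.sqrt x * (Real.sqrt x * Real.cos (t / Real.sqrt x)))
        (fun x : ℝ => (s - t) • (-(Real.sqrt x * Real.sin (t / Real.sqrt x)))) T
        (((cont_c s).sub (cont_c t)).continuousOn)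
        (((cont_h t).neg.const_smul (s - t)).continuousOn),
      cfc_sub _ _ T ((cont_c s).continuousOn) ((cont_c t).continuousOn),
      cfc_smul (s - t) (fun x : ℝ => -(Real.sqrt x * Real.sin (t / Real.sqrt x))) T
        ((cont_h t).neg.continuousOn),
      cfc_neg (fun x : ℝ => Real.sqrt x * Real.sin (t / Real.sqrt x)) T]
    rfl
  rw [hdiff]
  apply norm_cfc_le'' T _ (by positivity)
  intro x hx
  obtain ⟨hx0, hxR⟩ := hR x hx
  rcases eq_or_lt_of_le hx0 with hx0' | hx0'
  · simp [← hx0', Real.sqrt_zero]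
    positivity
  · set r := Real.sqrt x with hrdef
    have hr0 : 0 < r := Real.sqrt_pos.mpr hx0'
    have hrr : r * r = x := Real.mul_self_sqrt hx0'.le
    have hsplit : s / r = t / r + (s - t) / r := by field_simp; ring
    have heq : Real.sqrt x * (Real.sqrt x * Real.cos (s / Real.sqrt x))
          - Real.sqrt x * (Real.sqrt x * Real.cos (t / Real.sqrt x))
          - (s - t) • (-(Real.sqrt x * Real.sin (t / Real.sqrt x)))
        = x * (Real.cos (t / r + (s - t) / r) - Real.cos (t / r)
            + ((s - t) / r) * Real.sin (t / r)) := by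
      rw [← hrdef, ← hsplit, smul_eq_mul, ← hrr]
      field_simp
      ring
    rw [heq, abs_mul]
    have hb := key_cos (t / r) ((s - t) / r)
    calc |x| * |Real.cos (t / r + (s - t) / r) - Real.cos (t / r)
            + ((s - t) / r) * Real.sin (t / r)|
        ≤ |x| * (3 / 2 * ((s - t) / r) ^ 2) := mul_le_mul_of_nonneg_left hb (abs_nonneg _)
      _ = 3 / 2 * (s - t) ^ 2 := by
          rw [abs_of_nonneg hx0, ← hrr]
          field_simp

end deriv

section ops

variable (T : H →L[ℂ] H) (hT : IsSelfAdjoint T)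

lemma Bop_zero : Bop T 0 = 0 := by
  have : (fun x : ℝ => Real.sqrt x * (x * Real.sin (0 / Real.sqrt x))) = fun _ => (0:ℝ) := by
    funext x; simp
  rw [Bop, this]
  simp

include hT in
lemma Cop_zero (hspec : ∀ x ∈ spectrum ℝ T, 0 ≤ x) : Cop T 0 = T := by
  rw [Cop]
  have : cfc (fun x : ℝ => Real.sqrt x * (Real.sqrt x * Real.cos (0 / Real.sqrt x))) T
      = cfc (fun x : ℝ => x) T := by
    apply cfc_congr
    intro x hx
    simp [Real.mul_self_sqrt (hspec x hx)]
  rw [this, cfc_id' ℝ T]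

include hT in
lemma waveOp_selfAdjoint (t : ℝ) : IsSelfAdjoint (waveOp T t) := by
  rw [waveOp_eq]
  exact cfc_predicate _ T

include hT in
lemma waveOp_apply_T (t : ℝ) (z : H) : waveOp T t (T z) = Bop T t z := by
  have h1 : cfc (fun x : ℝ => (Real.sqrt x * Real.sin (t / Real.sqrt x)) * x) T
      = cfc (fun x : ℝ => Real.sqrt x * (x * Real.sin (t / Real.sqrt x))) T :=
    cfc_congr (fun x _ => by ring)
  have h2 : cfc (fun x : ℝ => (Real.sqrt x * Real.sin (t / Real.sqrt x)) * x) T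
      = cfc (fun x : ℝ => Real.sqrt x * Real.sin (t / Real.sqrt x)) T * cfc (fun x : ℝ => x) T :=
    cfc_mul _ _ T ((cont_h t).continuousOn) (continuous_id.continuousOn)
  have h3 : cfc (fun x : ℝ => x) T = T := cfc_id' ℝ T
  rw [waveOp_eq, Bop, ← h1, h2, h3]
  rfl

lemma waveOp_lipschitz (s t : ℝ) : ‖waveOp T s - waveOp T t‖ ≤ |s - t| := by
  rw [waveOp_eq, waveOp_eq,
    ← cfc_sub _ _ T ((cont_h s).continuousOn) ((cont_h t).continuousOn)]
  apply norm_cfc_le'' T _ (abs_nonneg _)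
  intro x _
  rcases le_or_gt x 0 with hx | hx
  · simp [Real.sqrt_eq_zero'.mpr hx, abs_nonneg]
  · have hr0 : 0 < Real.sqrt x := Real.sqrt_pos.mpr hx
    rw [← mul_sub, abs_mul, abs_of_nonneg hr0.le]
    calc Real.sqrt x * |Real.sin (s / Real.sqrt x) - Real.sin (t / Real.sqrt x)|
        ≤ Real.sqrt x * |s / Real.sqrt x - t / Real.sqrt x| :=
          mul_le_mul_of_nonneg_left (abs_sin_sub_sin_le _ _) hr0.le
      _ = |s - t| := by
          rw [div_sub_div_same, abs_div, abs_of_nonneg hr0.le]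
          field_simp
  
lemma continuous_waveOp : Continuous (fun t => waveOp T t) := by
  apply LipschitzWith.continuous (K := 1)
  apply LipschitzWith.of_dist_le_mul
  intro s t
  rw [dist_eq_norm]
  simpa [Real.dist_eq] using waveOp_lipschitz T s t

end ops

end Stmt13Aux


set_option maxHeartbeats 1000000 in
set_option synthInstance.maxHeartbeats 200000 in
/-- Let `σ > 0` and let `y ∈ dom L` satisfy `y ∈ closure(U)` and
`⟨y, u⟩ = 0` for all `u ∈ U^σ`.  Then `P(Iᵗ(Ly)) = 0` for all `0 ≤ t ≤ σ`
(`Γ₂` of the trajectory `v^y(t) = Iᵗy` vanishes on `[0,σ]`). -/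
theorem stmt13 (L₀ L : H →ₗ.[ℂ] H) (T : H →L[ℂ] H) (K : Submodule ℂ H)
    [K.HasOrthogonalProjection] (hs : Setting L₀ L T K)
    (σ : ℝ) (hσ : 0 < σ) (y : H) (hy : y ∈ L.domain)
    (hyU : y ∈ closure (reachSpan K T : Set H))
    (hyorth : ∀ u ∈ reachSet K T σ, ⟪y, u⟫ = 0) :
    ∀ t : ℝ, 0 ≤ t → t ≤ σ →
      (K.orthogonalProjectionOnto (waveOp T t (L ⟨y, hy⟩)) : H) = 0 := by
  intro t ht htσ
  classical
  set z : H := L ⟨y, hy⟩ with hz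
  have hT : IsSelfAdjoint T := hs.T_selfadjoint
  have hyz : T z = y := hs.T_inv_left ⟨y, hy⟩
  have hpos : (0 : H →L[ℂ] H) ≤ T := by
    rw [ContinuousLinearMap.nonneg_iff_isPositive]
    exact ⟨hT.isSymmetric, fun x => by
      simpa [ContinuousLinearMap.reApplyInnerSelf] using hs.T_positive x⟩
  have hspec : ∀ x ∈ spectrum ℝ T, 0 ≤ x ∧ x ≤ ‖T‖ * ‖(1 : H →L[ℂ] H)‖ := fun x hx =>
    ⟨spectrum_nonneg_of_nonneg hpos hx,
     le_trans (le_abs_self x) (by simpa using spectrum.norm_le_norm_mul_of_mem hx)⟩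
  have hBd : ∀ τ, HasDerivAt (Stmt13Aux.Bop T) (Stmt13Aux.Cop T τ) τ :=
    fun τ => Stmt13Aux.hasDerivAt_Bop T hT hspec τ
  have hCd : ∀ τ, HasDerivAt (Stmt13Aux.Cop T) (-(waveOp T τ)) τ :=
    fun τ => Stmt13Aux.hasDerivAt_Cop T hT hspec τ
  have hWcont : Continuous fun τ : ℝ => waveOp T τ := Stmt13Aux.continuous_waveOp T
  have hCcont : Continuous (Stmt13Aux.Cop T) := by
    rw [continuous_iff_continuousAt]; exact fun τ => (hCd τ).continuousAt
  -- Main claim: the projection on K of the trajectory vanishes on [0, σ].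
  have claimA : ∀ k ∈ K, ∀ τ : ℝ, 0 ≤ τ → τ ≤ σ → (⟪waveOp T τ z, k⟫ : ℂ) = 0 := by
    intro k hk
    set G : ℝ → ℂ := fun τ => ⟪waveOp T τ z, k⟫ with hG
    have hGcont : Continuous G :=
      (((ContinuousLinearMap.apply ℂ H z).continuous.comp hWcont).inner continuous_const)
    -- Claim C: the basic orthogonality identity for every admissible scalar control φ
    have claimC : ∀ φ : ℝ → ℝ, ContDiff ℝ (⊤:ℕ∞) φ → ∀ ε : ℝ, 0 < ε → (∀ x ≤ ε, φ x = 0) →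
        (∫ s in (0:ℝ)..σ, ((φ s : ℝ) : ℂ) * G (σ - s)) = 0 := by
      intro φ hφ ε hε hεvan
      have hφd : Differentiable ℝ φ := hφ.differentiable (by simp)
      have hφ1 : ContDiff ℝ (⊤:ℕ∞) (deriv φ) := (contDiff_infty_iff_deriv.mp hφ).2
      have hφ1d : Differentiable ℝ (deriv φ) := hφ1.differentiable (by simp)
      have hφ2cont : Continuous (deriv (deriv φ)) := ((contDiff_infty_iff_deriv.mp hφ1).2).continuous
      set f : ℝ → H := fun s => ((φ s : ℝ) : ℂ) • k with hf
      have hfd1 : ∀ s, HasDerivAt f (((deriv φ s : ℝ) : ℂ) • k) s := fun s =>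
        ((hφd s).hasDerivAt.ofReal_comp).smul_const k
      have hder1 : deriv f = fun s => ((deriv φ s : ℝ) : ℂ) • k := funext fun s => (hfd1 s).deriv
      have hfd2 : ∀ s, HasDerivAt (deriv f) (((deriv (deriv φ) s : ℝ) : ℂ) • k) s := by
        rw [hder1]
        exact fun s => ((hφ1d s).hasDerivAt.ofReal_comp).smul_const k
      have hder2 : deriv (deriv f) = fun s => ((deriv (deriv φ) s : ℝ) : ℂ) • k :=
        funext fun s => (hfd2 s).deriv
      have hφℂ : ContDiff ℝ (⊤:ℕ∞) (fun s : ℝ => ((φ s : ℝ) : ℂ)) :=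
        Complex.ofRealCLM.contDiff.comp hφ
      have hfsmooth : ContDiff ℝ (⊤:ℕ∞) f :=
        ((((ContinuousLinearMap.id ℂ ℂ).smulRight k).restrictScalars ℝ).contDiff).comp hφℂ
      have hmem : wave T f σ ∈ reachSet K T σ := by
        rw [reachSet, if_pos hσ.le]
        exact ⟨f, ⟨hfsmooth, fun s => K.smul_mem _ hk, ε, hε, fun s hs => by
          simp [hf, hεvan s hs]⟩, rfl⟩
      have h0 := hyorth _ hmem
      have hWk : Continuous fun s : ℝ => waveOp T (σ - s) k :=
        (ContinuousLinearMap.apply ℂ H k).continuous.comp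
          (hWcont.comp (continuous_const.sub continuous_id))
      have hIntCont : Continuous fun s : ℝ => ((deriv (deriv φ) s : ℝ) : ℂ) • waveOp T (σ - s) k :=
        ((Complex.continuous_ofReal.comp hφ2cont).smul hWk)
      have hwave : wave T f σ
          = -f σ + ∫ s in (0:ℝ)..σ, ((deriv (deriv φ) s : ℝ) : ℂ) • (waveOp T (σ - s) k) := by
        rw [wave]
        congr 1
        apply intervalIntegral.integral_congr
        intro s _
        rw [hder2]
        exact map_smul _ _ _
      set g : ℝ → ℂ := fun s => ⟪Stmt13Aux.Bop T (σ - s) z, k⟫ with hgdef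
      have hWyk : ∀ s : ℝ, (⟪y, waveOp T (σ - s) k⟫ : ℂ) = g s := by
        intro s
        rw [← hyz]
        calc (⟪T z, waveOp T (σ - s) k⟫ : ℂ)
            = ⟪ContinuousLinearMap.adjoint (waveOp T (σ - s)) (T z), k⟫ :=
              (ContinuousLinearMap.adjoint_inner_left _ _ _).symm
          _ = ⟪waveOp T (σ - s) (T z), k⟫ := by
              rw [(Stmt13Aux.waveOp_selfAdjoint T hT (σ - s)).adjoint_eq]
          _ = g s := by rw [Stmt13Aux.waveOp_apply_T T hT]
      have h0' : -((φ σ : ℝ) : ℂ) * ⟪y, k⟫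
          + (∫ s in (0:ℝ)..σ, ((deriv (deriv φ) s : ℝ) : ℂ) * g s) = 0 := by
        rw [hwave, inner_add_right, inner_neg_right] at h0
        have hswap := (innerSL ℂ y).intervalIntegral_comp_comm
          (μ := volume) (hIntCont.intervalIntegrable 0 σ)
        simp only [innerSL_apply_apply] at hswap
        rw [← hswap] at h0
        have heq2 : (∫ s in (0:ℝ)..σ, (⟪y, ((deriv (deriv φ) s : ℝ) : ℂ)
              • waveOp T (σ - s) k⟫ : ℂ))
            = ∫ s in (0:ℝ)..σ, ((deriv (deriv φ) s : ℝ) : ℂ) * g s := by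
          apply intervalIntegral.integral_congr
          intro s _
          simp only [inner_smul_right]
          rw [hWyk s]
        rw [heq2] at h0
        rw [hf] at h0
        simp only [inner_smul_right] at h0
        rw [← h0]
        ring_nf
      -- derivatives of g
      have hq : ∀ s : ℝ, HasDerivAt (fun s' => Stmt13Aux.Bop T (σ - s') z)
          (-(Stmt13Aux.Cop T (σ - s) z)) s := by
        intro s
        have h1 : HasDerivAt (fun s' : ℝ => σ - s') (-1 : ℝ) s := by
          simpa using (hasDerivAt_id s).const_sub σ
        have h2 : HasDerivAt (fun s' : ℝ => Stmt13Aux.Bop T (σ - s'))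
            ((-1 : ℝ) • Stmt13Aux.Cop T (σ - s)) s := (hBd (σ - s)).scomp s h1
        have h3 := (((ContinuousLinearMap.apply ℂ H z).restrictScalars ℝ).hasFDerivAt.comp_hasDerivAt s h2)
        simpa [Function.comp_def] using h3
      have hgd : ∀ s : ℝ, HasDerivAt g (-(⟪Stmt13Aux.Cop T (σ - s) z, k⟫ : ℂ)) s := by
        intro s
        have := (hq s).inner ℂ (hasDerivAt_const s k)
        simpa [inner_neg_left] using this
      set g1 : ℝ → ℂ := fun s => -(⟪Stmt13Aux.Cop T (σ - s) z, k⟫ : ℂ) with hg1def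
      have hq1 : ∀ s : ℝ, HasDerivAt (fun s' => Stmt13Aux.Cop T (σ - s') z)
          (waveOp T (σ - s) z) s := by
        intro s
        have h1 : HasDerivAt (fun s' : ℝ => σ - s') (-1 : ℝ) s := by
          simpa using (hasDerivAt_id s).const_sub σ
        have h2 : HasDerivAt (fun s' : ℝ => Stmt13Aux.Cop T (σ - s'))
            ((-1 : ℝ) • -(waveOp T (σ - s))) s := (hCd (σ - s)).scomp s h1
        have h3 := (((ContinuousLinearMap.apply ℂ H z).restrictScalars ℝ).hasFDerivAt.comp_hasDerivAt s h2)
        simpa [Function.comp_def] using h3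
      have hg1d : ∀ s : ℝ, HasDerivAt g1 (-(G (σ - s))) s := by
        intro s
        have := ((hq1 s).inner ℂ (hasDerivAt_const s k)).neg
        simp [hG] at this
        exact this
      have hg1cont : Continuous g1 := by
        apply Continuous.neg
        exact (((ContinuousLinearMap.apply ℂ H z).continuous.comp
          (hCcont.comp (continuous_const.sub continuous_id))).inner continuous_const)
      have hGσcont : Continuous fun s : ℝ => -(G (σ - s)) :=
        (hGcont.comp (continuous_const.sub continuous_id)).neg
      -- integration by parts, twice
      have ibp1 : (∫ s in (0:ℝ)..σ, g s * ((deriv (deriv φ) s : ℝ) : ℂ))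
          = g σ * ((deriv φ σ : ℝ) : ℂ) - g 0 * ((deriv φ 0 : ℝ) : ℂ)
            - ∫ s in (0:ℝ)..σ, g1 s * ((deriv φ s : ℝ) : ℂ) := by
        apply intervalIntegral.integral_mul_deriv_eq_deriv_mul
        · exact fun x _ => hgd x
        · exact fun x _ => ((hφ1d x).hasDerivAt.ofReal_comp)
        · exact (hg1cont.intervalIntegrable 0 σ)
        · exact ((Complex.continuous_ofReal.comp hφ2cont).intervalIntegrable 0 σ)
      have ibp2 : (∫ s in (0:ℝ)..σ, g1 s * ((deriv φ s : ℝ) : ℂ))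
          = g1 σ * ((φ σ : ℝ) : ℂ) - g1 0 * ((φ 0 : ℝ) : ℂ)
            - ∫ s in (0:ℝ)..σ, (-(G (σ - s))) * ((φ s : ℝ) : ℂ) := by
        apply intervalIntegral.integral_mul_deriv_eq_deriv_mul
        · exact fun x _ => hg1d x
        · exact fun x _ => ((hφd x).hasDerivAt.ofReal_comp)
        · exact (hGσcont.intervalIntegrable 0 σ)
        · exact ((Complex.continuous_ofReal.comp hφ1.continuous).intervalIntegrable 0 σ)
      -- boundary values
      have hφ0 : φ 0 = 0 := hεvan 0 hε.le
      have hdφ0 : deriv φ 0 = 0 := by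
        have hev : φ =ᶠ[nhds 0] fun _ => 0 := by
          filter_upwards [Iic_mem_nhds hε] with x hx using hεvan x hx
        rw [hev.deriv_eq]
        simp
      have hgσ : g σ = 0 := by
        simp [hgdef, sub_self, Stmt13Aux.Bop_zero]
      have hg1σ : g1 σ = -(⟪y, k⟫ : ℂ) := by
        simp only [hg1def, sub_self]
        rw [Stmt13Aux.Cop_zero T hT (fun x hx => (hspec x hx).1), hyz]
      -- assemble
      have e1 : (∫ s in (0:ℝ)..σ, ((deriv (deriv φ) s : ℝ) : ℂ) * g s)
          = ∫ s in (0:ℝ)..σ, g s * ((deriv (deriv φ) s : ℝ) : ℂ) :=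
        intervalIntegral.integral_congr fun s _ => mul_comm _ _
      have e2 : (∫ s in (0:ℝ)..σ, (-(G (σ - s))) * ((φ s : ℝ) : ℂ))
          = -∫ s in (0:ℝ)..σ, ((φ s : ℝ) : ℂ) * G (σ - s) := by
        rw [← intervalIntegral.integral_neg]
        exact intervalIntegral.integral_congr fun s _ => by ring
      rw [e1, ibp1, ibp2, hgσ, hg1σ, hφ0, hdφ0, e2] at h0'
      push_cast at h0'
      linear_combination -h0'
    -- Claim B: G vanishes on the open interval
    have claimB : ∀ τ ∈ Set.Ioo (0:ℝ) σ, G τ = 0 := by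
      intro τ hτ
      by_contra hne
      set s₀ : ℝ := σ - τ with hs₀def
      have hs₀ : s₀ ∈ Set.Ioo (0:ℝ) σ := ⟨by simp only [hs₀def]; linarith [hτ.2],
        by simp only [hs₀def]; linarith [hτ.1]⟩
      set ρ : ℝ → ℝ := fun s => ((starRingEnd ℂ) (G τ) * G (σ - s)).re with hρdef
      have hρcont : Continuous ρ :=
        Complex.continuous_re.comp
          (continuous_const.mul (hGcont.comp (continuous_const.sub continuous_id)))
      have hρs₀ : 0 < ρ s₀ := by
        have hττ : σ - s₀ = τ := by simp [hs₀def]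
        have hcm : (starRingEnd ℂ) (G τ) * (G τ) = ((Complex.normSq (G τ) : ℝ) : ℂ) := by
          rw [mul_comm, Complex.mul_conj]
        simp only [hρdef, hττ, hcm, Complex.ofReal_re]
        exact Complex.normSq_pos.mpr hne
      set U : Set ℝ := ρ ⁻¹' (Set.Ioi 0) ∩ Set.Ioo 0 σ with hU
      have hUopen : IsOpen U := (isOpen_Ioi.preimage hρcont).inter isOpen_Ioo
      have hs₀U : s₀ ∈ U := ⟨hρs₀, hs₀⟩
      obtain ⟨δ, hδ0, hδball⟩ := Metric.isOpen_iff.mp hUopen s₀ hs₀U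
      set φb : ContDiffBump s₀ := ⟨δ/4, δ/2, by positivity, by linarith⟩ with hφbdef
      have hrout : φb.rOut = δ/2 := rfl
      have hrin : φb.rIn = δ/4 := rfl
      have hsupp : Function.support φb ⊆ U := by
        rw [φb.support_eq]
        intro x hxb
        exact hδball (Metric.ball_subset_ball (by rw [hrout]; linarith) hxb)
      have hmemhalf : s₀ - δ/2 ∈ Set.Ioo (0:ℝ) σ := by
        have : s₀ - δ/2 ∈ Metric.ball s₀ δ := by
          simp only [Metric.mem_ball, Real.dist_eq]
          rw [abs_of_nonpos (by linarith)]
          linarith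
        exact (hδball this).2
      have hε' : 0 < s₀ - δ/2 := hmemhalf.1
      have hvan : ∀ x ≤ s₀ - δ/2, φb x = 0 := by
        intro x hx
        apply Function.notMem_support.mp
        rw [φb.support_eq]
        simp only [Metric.mem_ball, Real.dist_eq, not_lt]
        rw [abs_of_nonpos (by linarith)]
        linarith [hrout]
      have hint0 := claimC φb (φb.contDiff) (s₀ - δ/2) hε' hvan
      set c : ℂ := (starRingEnd ℂ) (G τ) with hcdef
      have h2 : (∫ s in (0:ℝ)..σ, c * (((φb s : ℝ) : ℂ) * G (σ - s))) = 0 := by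
        rw [intervalIntegral.integral_const_mul, hint0, mul_zero]
      have hcont2 : Continuous fun s : ℝ => c * (((φb s : ℝ) : ℂ) * G (σ - s)) :=
        continuous_const.mul ((Complex.continuous_ofReal.comp φb.continuous).mul
          (hGcont.comp (continuous_const.sub continuous_id)))
      have h3 : (∫ s in (0:ℝ)..σ, φb s * ρ s) = 0 := by
        have hre := Complex.reCLM.intervalIntegral_comp_comm (μ := volume) (hcont2.intervalIntegrable 0 σ)
        rw [h2] at hre
        have hpt : ∀ s : ℝ, Complex.reCLM (c * (((φb s : ℝ) : ℂ) * G (σ - s))) = φb s * ρ s := by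
          intro s
          have hcomm : c * (((φb s : ℝ) : ℂ) * G (σ - s))
              = ((φb s : ℝ) : ℂ) * (c * G (σ - s)) := by ring
          simp [hcomm, Complex.re_ofReal_mul, hρdef]
        rw [show (∫ s in (0:ℝ)..σ, Complex.reCLM (c * (((φb s : ℝ) : ℂ) * G (σ - s))))
            = ∫ s in (0:ℝ)..σ, φb s * ρ s from
          intervalIntegral.integral_congr fun s _ => hpt s] at hre
        simpa using hre
      rw [intervalIntegral.integral_of_le hσ.le] at h3
      have hnn : ∀ s, 0 ≤ φb s * ρ s := by
        intro s
        rcases eq_or_ne (φb s) 0 with h | h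
        · rw [h, zero_mul]
        · exact mul_nonneg φb.nonneg (le_of_lt (hsupp (Function.mem_support.mpr h)).1)
      have hintOn : IntegrableOn (fun s => φb s * ρ s) (Set.Ioc 0 σ) :=
        ((φb.continuous.mul hρcont).continuousOn.integrableOn_Icc).mono_set
          Set.Ioc_subset_Icc_self
      have hsuppos : 0 < (volume.restrict (Set.Ioc 0 σ))
          (Function.support fun s => φb s * ρ s) := by
        rw [Measure.restrict_apply' measurableSet_Ioc]
        refine lt_of_lt_of_le (Metric.measure_ball_pos volume s₀
          (show (0:ℝ) < δ/4 by linarith)) (measure_mono ?_)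
        intro x hx
        have hxU : x ∈ U := hδball (Metric.ball_subset_ball (by linarith) hx)
        refine ⟨Function.mem_support.mpr ?_, Set.Ioo_subset_Ioc_self hxU.2⟩
        have h1 : φb x = 1 := φb.one_of_mem_closedBall
          (by rw [Metric.mem_closedBall, hrin]; exact (Metric.mem_ball.mp hx).le)
        rw [h1, one_mul]
        exact ne_of_gt hxU.1
      have hcontra := (integral_pos_iff_support_of_nonneg_ae
        (Filter.Eventually.of_forall hnn) hintOn).mpr hsuppos
      rw [h3] at hcontra
      exact lt_irrefl 0 hcontra
    -- conclude Claim A by continuity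
    intro τ hτ0 hτσ
    have hclosed : IsClosed {τ : ℝ | G τ = 0} := isClosed_eq hGcont continuous_const
    have hsub : Set.Icc (0:ℝ) σ ⊆ {τ : ℝ | G τ = 0} := by
      rw [← closure_Ioo (ne_of_lt hσ)]
      exact closure_minimal (fun τ hτ => claimB τ hτ) hclosed
    exact hsub ⟨hτ0, hτσ⟩
  have hmemO : waveOp T t z ∈ Kᗮ := by
    rw [Submodule.mem_orthogonal]
    intro u hu
    rw [inner_eq_zero_symm]
    exact claimA u hu t ht htσ
  have hproj := Submodule.orthogonalProjectionOnto_eq_zero_iff.mpr hmemO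
  rw [hproj]
  simp
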